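/- Let α > −1, β ∈ {0, 1/3}, γ ≥ 1, and let ω be a weight on the upper half-plane H. Let {λ_Q}_{Q ∈ 𝒬^β} be a family of nonnegative numbers indexed by the dyadic Carleson squares 𝒬^β = {Q_I : I ∈ D^β}, and assume there is a constant A > 0 such that for every Q⁰ ∈ 𝒬^β, ∑_{Q ∈ 𝒬^β, Q ⊆ Q⁰} λ_Q ≤ A |Q⁰|_{ω,α}^γ. Then there is a constant B > 0 such that for every 1 < p < ∞, every normalized Young function Φ in the class B_p, and every compactly supported measurable function f, ∑_{Q ∈ 𝒬^β} λ_Q ‖f‖_{Q,Φ,ω,α}^{pγ} ≤ B ‖M^{d,β}_{Φ,ω,α} f‖_{L^p(H, ω dV_α)}^{pγ}. -/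

import Mathlib

open MeasureTheory Set Filter
open scoped ENNReal NNReal

noncomputable section

/-- The upper half-plane `H = {z : 0 < Im z}`. -/
def UHP : Set ℂ := {z : ℂ | 0 < z.im}

/-- The measure `dV_α = y^α dx dy` supported on the upper half-plane. -/
def Vm (α : ℝ) : Measure ℂ :=
  MeasureTheory.volume.withDensity
    (fun z => if 0 < z.im then ENNReal.ofReal (z.im ^ α) else 0)

/-- The Carleson square `Q_I` attached to the interval `I = (a, b)`. -/
def Qbox (a b : ℝ) : Set ℂ :=
  {z : ℂ | z.re ∈ Set.Ioo a b ∧ z.im ∈ Set.Ioo 0 (b - a)}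

/-- The weighted measure `|E|_{ω,α} = ∫_E ω dV_α` of a set `E`. -/
def wvol (α : ℝ) (ω : ℂ → ℝ) (E : Set ℂ) : ℝ≥0∞ :=
  ∫⁻ z in E, ENNReal.ofReal (ω z) ∂(Vm α)

/-- A weight: a nonnegative locally integrable function on the upper half-plane. -/
def IsWeight (α : ℝ) (ω : ℂ → ℝ) : Prop :=
  Measurable ω ∧ (∀ z, 0 ≤ ω z) ∧ MeasureTheory.LocallyIntegrableOn ω UHP (Vm α)

/-- A normalized Young function: continuous, convex, increasing on `[0,∞)`,
with `Φ 0 = 0`, `Φ 1 = 1` and `Φ t → ∞` as `t → ∞`. -/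
structure IsNormalizedYoung (Φ : ℝ → ℝ) : Prop where
  cont : ContinuousOn Φ (Set.Ici 0)
  convex : ConvexOn ℝ (Set.Ici 0) Φ
  mono : MonotoneOn Φ (Set.Ici 0)
  map_zero : Φ 0 = 0
  map_one : Φ 1 = 1
  tendsto_atTop : Filter.Tendsto Φ Filter.atTop Filter.atTop

/-- The `Δ₂` (doubling) condition with constant `K`. -/
def Delta2 (Φ : ℝ → ℝ) (K : ℝ) : Prop :=
  1 < K ∧ ∀ t : ℝ, 0 ≤ t → Φ (2 * t) ≤ K * Φ t

/-- The class `B_p`: `Δ₂` together with `∫_c^∞ Φ(t)/t^p dt/t < ∞` for some `c > 0`. -/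
def InBp (Φ : ℝ → ℝ) (p : ℝ) : Prop :=
  (∃ K : ℝ, Delta2 Φ K) ∧
    ∃ c : ℝ, 0 < c ∧ (∫⁻ t in Set.Ioi c, ENNReal.ofReal (Φ t / t ^ (p + 1))) < ⊤

/-- The Luxemburg norm `‖f‖_{Q_I, Φ, ω, α}` over the Carleson square of `I = (a,b)`. -/
def luxNorm (α : ℝ) (Φ : ℝ → ℝ) (ω : ℂ → ℝ) (a b : ℝ) (f : ℂ → ℂ) : ℝ≥0∞ :=
  ⨅ (t : ℝ) (_ : 0 < t)
    (_ : (∫⁻ z in Qbox a b, ENNReal.ofReal (Φ (‖f z‖ / t) * ω z) ∂(Vm α)) /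
          wvol α ω (Qbox a b) ≤ 1),
    ENNReal.ofReal t

/-- The maximal function `M_{Φ,ω,α} f`. -/
def maxFn (α : ℝ) (Φ : ℝ → ℝ) (ω : ℂ → ℝ) (f : ℂ → ℂ) (z : ℂ) : ℝ≥0∞ :=
  ⨆ (a : ℝ) (b : ℝ) (_ : z ∈ Qbox a b), luxNorm α Φ ω a b f

/-- The dyadic grid `D^β`, as a set of pairs of endpoints. -/
def dyadicGrid (β : ℝ) : Set (ℝ × ℝ) :=
  {I : ℝ × ℝ | ∃ j m : ℤ, I.1 = (2 : ℝ) ^ j * (m + (-1 : ℝ) ^ j * β) ∧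
    I.2 = (2 : ℝ) ^ j * (m + 1 + (-1 : ℝ) ^ j * β)}

/-- The dyadic maximal function `M^{d,β}_{Φ,ω,α} f`. -/
def dyadicMax (β α : ℝ) (Φ : ℝ → ℝ) (ω : ℂ → ℝ) (f : ℂ → ℂ) (z : ℂ) : ℝ≥0∞ :=
  ⨆ (I : ℝ × ℝ) (_ : I ∈ dyadicGrid β) (_ : z ∈ Qbox I.1 I.2),
    luxNorm α Φ ω I.1 I.2 f

/-- The Hardy–Littlewood maximal function `M_α g` of the upper half-plane. -/
def hlMax (α : ℝ) (g : ℂ → ℝ) (z : ℂ) : ℝ≥0∞ :=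
  ⨆ (a : ℝ) (b : ℝ) (_ : z ∈ Qbox a b),
    (∫⁻ w in Qbox a b, ENNReal.ofReal |g w| ∂(Vm α)) / Vm α (Qbox a b)

/-- The weighted Hardy–Littlewood maximal function `M_{ω,α} f`. -/
def whlMax (α : ℝ) (ω : ℂ → ℝ) (f : ℂ → ℂ) (z : ℂ) : ℝ≥0∞ :=
  ⨆ (a : ℝ) (b : ℝ) (_ : z ∈ Qbox a b),
    (∫⁻ w in Qbox a b, ENNReal.ofReal (‖f w‖ * ω w) ∂(Vm α)) /
      wvol α ω (Qbox a b)

/-- The Békollè–Bonami constant `[ω]_{B_{p,α}}`. -/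
def BBnorm (α p : ℝ) (ω : ℂ → ℝ) : ℝ≥0∞ :=
  ⨆ (a : ℝ) (b : ℝ) (_ : a < b),
    (wvol α ω (Qbox a b) / Vm α (Qbox a b)) *
      ((∫⁻ z in Qbox a b, ENNReal.ofReal (ω z) ^ (1 - p / (p - 1)) ∂(Vm α)) /
          Vm α (Qbox a b)) ^ (p - 1)

/-- Membership in the Békollè–Bonami class `B_{p,α}`. -/
def InBB (α p : ℝ) (ω : ℂ → ℝ) : Prop := BBnorm α p ω < ⊤

/-- Membership in `𝔹_{∞,α} = ⋃_{p>1} B_{p,α}`. -/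
def InBBinfty (α : ℝ) (ω : ℂ → ℝ) : Prop := ∃ p : ℝ, 1 < p ∧ InBB α p ω

/-- The quantity `∫_H |f|^p ω dV_α`. -/
def lpInt (α p : ℝ) (ω : ℂ → ℝ) (f : ℂ → ℂ) : ℝ≥0∞ :=
  ∫⁻ z, ENNReal.ofReal (‖f z‖) ^ p * ENNReal.ofReal (ω z) ∂(Vm α)

/-- The function `K_μ(z) = sup_{I : z ∈ Q_I} μ(Q_I)/|Q_I|_{ω,α}`. -/
def Kmu (α : ℝ) (ω : ℂ → ℝ) (μ : Measure ℂ) (z : ℂ) : ℝ≥0∞ :=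
  ⨆ (a : ℝ) (b : ℝ) (_ : z ∈ Qbox a b), μ (Qbox a b) / wvol α ω (Qbox a b)

/-- `ω` is `α`-doubling with doubling function `φ` and constant `K`. -/
structure AlphaDoubling (α : ℝ) (ω : ℂ → ℝ) (φ : ℝ≥0∞ → ℝ≥0∞) (K : ℝ≥0∞) : Prop where
  mono : Monotone φ
  map_one : φ 1 = 1
  one_le : 1 ≤ K
  bound : ∀ a b : ℝ, ∀ E ⊆ Qbox a b, MeasurableSet E →
    wvol α ω (Qbox a b) / wvol α ω E ≤ K * φ (Vm α (Qbox a b) / Vm α E)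

/-- The complementary (conjugate) Young function `Ψ(s) = sup_{t ≥ 0} (t s − Φ(t))`,
valued in `ℝ≥0∞`. -/
def conjugateYoung (Φ : ℝ → ℝ) (s : ℝ) : ℝ≥0∞ :=
  ⨆ (t : ℝ) (_ : 0 ≤ t), ENNReal.ofReal (t * s - Φ t)

/-- The unweighted Luxemburg norm for an `ℝ≥0∞`-valued Young function. -/
def luxNormE (α : ℝ) (Ψ : ℝ → ℝ≥0∞) (a b : ℝ) (g : ℂ → ℝ) : ℝ≥0∞ :=
  ⨅ (t : ℝ) (_ : 0 < t)
    (_ : (∫⁻ z in Qbox a b, Ψ (|g z| / t) ∂(Vm α)) / Vm α (Qbox a b) ≤ 1),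
    ENNReal.ofReal t

/-- The Békollè–Bonami `B_{∞,α}` constant
`[ω]_{B_{∞,α}} = sup_I |Q_I|_{ω,α}⁻¹ ∫_{Q_I} M_α(ω χ_{Q_I}) dV_α`. -/
def BBinftyNorm (α : ℝ) (ω : ℂ → ℝ) : ℝ≥0∞ :=
  ⨆ (a : ℝ) (b : ℝ) (_ : a < b),
    (∫⁻ z in Qbox a b, hlMax α ((Qbox a b).indicator ω) z ∂(Vm α)) /
      wvol α ω (Qbox a b)

end


noncomputable section MyHelpers


lemma aux_rpow_sub_one_mul {γ : ℝ} (hγ : 1 ≤ γ) (x : ℝ≥0∞) : x ^ (γ - 1) * x = x ^ γ := by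
  rcases eq_or_ne x 0 with rfl | hx0
  · rcases eq_or_lt_of_le hγ with h1 | h1
    · simp [← h1]
    · rw [ENNReal.zero_rpow_of_pos (by linarith), ENNReal.zero_rpow_of_pos (by linarith), zero_mul]
  rcases eq_or_ne x ⊤ with rfl | hxt
  · rcases eq_or_lt_of_le hγ with h1 | h1
    · simp [← h1]
    · rw [ENNReal.top_rpow_of_pos (by linarith), ENNReal.top_rpow_of_pos (by linarith),
        ENNReal.top_mul_top]
  · have := ENNReal.rpow_add (γ - 1) 1 hx0 hxt
    simp only [sub_add_cancel, ENNReal.rpow_one] at this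
    exact this.symm

lemma aux_rpow_le_of_le {γ : ℝ} (hγ : 1 ≤ γ) {x W : ℝ≥0∞} (h : x ≤ W) :
    x ^ γ ≤ W ^ (γ - 1) * x := by
  rw [← aux_rpow_sub_one_mul hγ x]
  exact mul_le_mul_left (ENNReal.rpow_le_rpow h (by linarith)) x

lemma layer_finite {r : ℝ} (hr : 0 < r) {c : ℝ} (hc : 0 < c) :
    ∫⁻ t in Ioo (0:ℝ) c, ENNReal.ofReal (r * t ^ (r - 1)) = ENNReal.ofReal (c ^ r) := by
  have hint : IntegrableOn (fun t : ℝ => r * t ^ (r - 1)) (Ioo 0 c) := by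
    have h1 : IntervalIntegrable (fun t : ℝ => t ^ (r - 1)) volume 0 c :=
      intervalIntegral.intervalIntegrable_rpow' (by linarith)
    have h2 := (h1.const_mul r).1
    exact h2.mono_set Set.Ioo_subset_Ioc_self
  rw [← ofReal_integral_eq_lintegral_ofReal hint]
  · congr 1
    rw [← MeasureTheory.integral_Ioc_eq_integral_Ioo,
      ← intervalIntegral.integral_of_le hc.le, intervalIntegral.integral_const_mul,
      integral_rpow (Or.inl (by linarith))]
    rw [sub_add_cancel, Real.zero_rpow (ne_of_gt hr)]
    field_simp
    simp
  · filter_upwards [ae_restrict_mem measurableSet_Ioo] with t ht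
    have : (0:ℝ) ≤ t ^ (r - 1) := Real.rpow_nonneg ht.1.le _
    positivity

lemma layer {r : ℝ} (hr : 0 < r) (x : ℝ≥0∞) :
    ∫⁻ t in Set.Ioi (0:ℝ),
      ({s : ℝ | ENNReal.ofReal s < x}.indicator (fun s => ENNReal.ofReal (r * s ^ (r - 1)))) t
      = x ^ r := by
  rcases eq_or_ne x 0 with rfl | hx0
  · have : {s : ℝ | ENNReal.ofReal s < 0} = ∅ := by simp
    rw [this]
    simp [ENNReal.zero_rpow_of_pos hr]
  rcases eq_or_ne x ⊤ with rfl | hxt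
  · have hset : {s : ℝ | ENNReal.ofReal s < (⊤:ℝ≥0∞)} = Set.univ := by
      ext s; simp [ENNReal.ofReal_lt_top]
    rw [hset, Set.indicator_univ, ENNReal.top_rpow_of_pos hr]
    rw [eq_top_iff]
    by_contra hlt
    push_neg at hlt
    have hne : (∫⁻ t in Set.Ioi (0:ℝ), ENNReal.ofReal (r * t ^ (r-1))) ≠ ⊤ := by
      simpa [lt_top_iff_ne_top] using hlt
    obtain ⟨n, hn⟩ := ENNReal.exists_nat_gt hne
    -- but integral ≥ ofReal ((n:ℝ)) by restricting to Ioo 0 ((n:ℝ)^(1/r))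
    set c : ℝ := ((n:ℝ)+1) ^ (1/r) with hcdef
    have hc : 0 < c := Real.rpow_pos_of_pos (by positivity) _
    have hcr : c ^ r = (n:ℝ)+1 := by
      rw [hcdef, ← Real.rpow_mul (by positivity), one_div, inv_mul_cancel₀ (ne_of_gt hr),
        Real.rpow_one]
    have hge : ENNReal.ofReal (c ^ r) ≤ ∫⁻ t in Set.Ioi (0:ℝ), ENNReal.ofReal (r * t ^ (r-1)) := by
      rw [← layer_finite hr hc]
      exact lintegral_mono_set (fun t ht => ht.1)
    rw [hcr] at hge
    rw [show ((n:ℝ≥0∞)) = ENNReal.ofReal (n:ℝ) by simp] at hn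
    have h2 := lt_of_le_of_lt hge hn
    rw [ENNReal.ofReal_lt_ofReal_iff_of_nonneg (by positivity)] at h2
    linarith
  -- main case
  · set c : ℝ := x.toReal with hcdef
    have hc : 0 < c := ENNReal.toReal_pos hx0 hxt
    have heq : ∫⁻ t in Set.Ioi (0:ℝ),
        ({s : ℝ | ENNReal.ofReal s < x}.indicator (fun s => ENNReal.ofReal (r * s ^ (r - 1)))) t
        = ∫⁻ t in Set.Ioi (0:ℝ),
        ((Set.Ioo 0 c).indicator (fun s => ENNReal.ofReal (r * s ^ (r - 1)))) t := by
      apply setLIntegral_congr_fun measurableSet_Ioi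
      intro t ht
      have : ENNReal.ofReal t < x ↔ t < c := ENNReal.ofReal_lt_iff_lt_toReal (le_of_lt ht) hxt
      by_cases h : ENNReal.ofReal t < x
      · rw [Set.indicator_of_mem (show t ∈ {s : ℝ | ENNReal.ofReal s < x} from h),
          Set.indicator_of_mem (show t ∈ Set.Ioo (0:ℝ) c from ⟨ht, this.mp h⟩)]
      · rw [Set.indicator_of_notMem (show t ∉ {s : ℝ | ENNReal.ofReal s < x} from h),
          Set.indicator_of_notMem (show t ∉ Set.Ioo (0:ℝ) c from
            fun hmem => h (this.mpr hmem.2))]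
    rw [heq, lintegral_indicator measurableSet_Ioo,
      Measure.restrict_restrict measurableSet_Ioo,
      Set.inter_eq_self_of_subset_left (fun t ht => ht.1), layer_finite hr hc]
    rw [← ENNReal.ofReal_rpow_of_pos hc, hcdef, ENNReal.ofReal_toReal hxt]


def dEnds (β : ℝ) (k : ℤ × ℤ) : ℝ × ℝ :=
  ((2:ℝ) ^ k.1 * ((k.2 : ℝ) + (-1:ℝ) ^ k.1 * β), (2:ℝ) ^ k.1 * ((k.2 : ℝ) + 1 + (-1:ℝ) ^ k.1 * β))

lemma grid_eq_range (β : ℝ) : dyadicGrid β = Set.range (dEnds β) := by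
  ext I
  constructor
  · rintro ⟨j, m, h1, h2⟩
    exact ⟨(j, m), Prod.ext h1.symm h2.symm⟩
  · rintro ⟨k, rfl⟩
    exact ⟨k.1, k.2, rfl, rfl⟩

lemma dEnds_mem_grid (β : ℝ) (k : ℤ × ℤ) : dEnds β k ∈ dyadicGrid β := by
  rw [grid_eq_range]; exact Set.mem_range_self k

lemma two_zpow_pos (j : ℤ) : (0:ℝ) < 2 ^ j := zpow_pos two_pos j

lemma dEnds_injective (β : ℝ) : Function.Injective (dEnds β) := by
  rintro ⟨j, m⟩ ⟨j', m'⟩ h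
  rw [Prod.ext_iff] at h
  obtain ⟨h1, h2⟩ := h
  simp only [dEnds] at h1 h2
  have h3 : (2:ℝ) ^ j = 2 ^ j' := by linear_combination h2 - h1
  have hj : j = j' := by
    have := zpow_right_injective₀ (by norm_num : (0:ℝ) < 2) (by norm_num : (2:ℝ) ≠ 1) h3
    exact_mod_cast this
  subst hj
  have h4 : ((m:ℝ)) = m' := by
    have hne := ne_of_gt (two_zpow_pos j)
    have := mul_left_cancel₀ hne h1
    linarith
  exact Prod.ext rfl (by exact_mod_cast h4)

/-- the "dyadic coordinate" of `x` at level `j`. -/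
def dxi (β : ℝ) (j : ℤ) (x : ℝ) : ℝ := x / 2 ^ j - (-1:ℝ) ^ j * β

lemma left_le_iff (β : ℝ) (j n : ℤ) (x : ℝ) :
    (dEnds β (j, n)).1 ≤ x ↔ (n:ℝ) ≤ dxi β j x := by
  have hp := two_zpow_pos j
  simp only [dEnds, dxi]
  rw [le_sub_iff_add_le, le_div_iff₀ hp]
  constructor <;> intro h <;> nlinarith

lemma lt_left_iff (β : ℝ) (j n : ℤ) (x : ℝ) :
    x < (dEnds β (j, n)).1 ↔ dxi β j x < (n:ℝ) := by
  have hp := two_zpow_pos j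
  simp only [dEnds, dxi]
  rw [sub_lt_iff_lt_add, div_lt_iff₀ hp]
  constructor <;> intro h <;> nlinarith

lemma right_eq_left (β : ℝ) (j m : ℤ) : (dEnds β (j, m)).2 = (dEnds β (j, m + 1)).1 := by
  simp only [dEnds]
  push_cast
  ring

lemma mem_Ico_dEnds (β : ℝ) (j m : ℤ) (x : ℝ) :
    x ∈ Set.Ico (dEnds β (j, m)).1 (dEnds β (j, m)).2 ↔
      (m:ℝ) ≤ dxi β j x ∧ dxi β j x < (m:ℝ) + 1 := by
  rw [Set.mem_Ico, right_eq_left, left_le_iff, lt_left_iff]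
  push_cast
  tauto

/-- the level-`j` dyadic interval containing `x`. -/
def ancK (β : ℝ) (j : ℤ) (x : ℝ) : ℤ × ℤ := (j, ⌊dxi β j x⌋)

lemma anc_spec (β : ℝ) (j : ℤ) (x : ℝ) :
    x ∈ Set.Ico (dEnds β (ancK β j x)).1 (dEnds β (ancK β j x)).2 :=
  (mem_Ico_dEnds β j _ x).mpr ⟨Int.floor_le _, Int.lt_floor_add_one _⟩

lemma anc_unique (β : ℝ) {j m : ℤ} {x : ℝ}
    (h : x ∈ Set.Ico (dEnds β (j, m)).1 (dEnds β (j, m)).2) : ancK β j x = (j, m) := by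
  obtain ⟨h1, h2⟩ := (mem_Ico_dEnds β j m x).mp h
  have : ⌊dxi β j x⌋ = m := Int.floor_eq_iff.mpr ⟨h1, h2⟩
  simp [ancK, this]

lemma left_mem_Ico (β : ℝ) (k : ℤ × ℤ) :
    (dEnds β k).1 ∈ Set.Ico (dEnds β k).1 (dEnds β k).2 := by
  refine ⟨le_rfl, ?_⟩
  obtain ⟨j, m⟩ := k
  simp only [dEnds]
  have hp := two_zpow_pos j
  nlinarith

lemma lattice_step {β : ℝ} (hβ : β = 0 ∨ β = 1/3) (j m : ℤ) :
    ∃ M : ℤ, (dEnds β (j + 1, m)).1 = (dEnds β (j, M)).1 := by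
  have h2 : (2:ℝ) ^ (j+1) = 2 ^ j * 2 := by
    rw [zpow_add₀ (by norm_num : (2:ℝ) ≠ 0)]; ring
  have hm1 : (-1:ℝ) ^ (j+1) = -((-1:ℝ) ^ j) := by
    rw [zpow_add₀ (by norm_num : (-1:ℝ) ≠ 0)]; ring
  rcases hβ with rfl | rfl
  · exact ⟨2 * m, by simp only [dEnds]; rw [h2]; push_cast; ring⟩
  · rcases Int.even_or_odd j with he | ho
    · refine ⟨2 * m - 1, ?_⟩
      simp only [dEnds]
      rw [h2, hm1, he.neg_one_zpow]
      push_cast; ring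
    · refine ⟨2 * m + 1, ?_⟩
      simp only [dEnds]
      rw [h2, hm1, ho.neg_one_zpow]
      push_cast; ring

lemma lattice {β : ℝ} (hβ : β = 0 ∨ β = 1/3) {j j' : ℤ} (h : j ≤ j') :
    ∀ m' : ℤ, ∃ M : ℤ, (dEnds β (j', m')).1 = (dEnds β (j, M)).1 := by
  refine Int.le_induction (motive := fun n _ => ∀ m' : ℤ, ∃ M : ℤ, (dEnds β (n, m')).1 = (dEnds β (j, M)).1) ?_ ?_ j' h
  · exact fun m' => ⟨m', rfl⟩
  · intro n _ ih m'
    obtain ⟨M1, hM1⟩ := lattice_step hβ n m'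
    obtain ⟨M, hM⟩ := ih M1
    exact ⟨M, hM1.trans hM⟩

lemma dyadic_nested {β : ℝ} (hβ : β = 0 ∨ β = 1/3) {k k' : ℤ × ℤ} (hj : k.1 ≤ k'.1)
    (hx : ∃ x, x ∈ Set.Ico (dEnds β k).1 (dEnds β k).2 ∩
      Set.Ico (dEnds β k').1 (dEnds β k').2) :
    Set.Ico (dEnds β k).1 (dEnds β k).2 ⊆ Set.Ico (dEnds β k').1 (dEnds β k').2 := by
  obtain ⟨x, hx1, hx2⟩ := hx
  obtain ⟨j, m⟩ := k
  obtain ⟨j', m'⟩ := k'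
  simp only at hj
  obtain ⟨Ma, hMa⟩ := lattice hβ hj m'
  obtain ⟨Mb, hMb⟩ := lattice hβ hj (m' + 1)
  have hIco' : Set.Ico (dEnds β (j', m')).1 (dEnds β (j', m')).2
      = Set.Ico (dEnds β (j, Ma)).1 (dEnds β (j, Mb)).1 := by
    rw [right_eq_left, hMa, hMb]
  rw [hIco'] at hx2 ⊢
  obtain ⟨hm1, hm2⟩ := (mem_Ico_dEnds β j m x).mp hx1
  have ha : (Ma:ℝ) ≤ dxi β j x := (left_le_iff β j Ma x).mp hx2.1
  have hb : dxi β j x < (Mb:ℝ) := (lt_left_iff β j Mb x).mp (lt_of_not_ge (fun h => absurd h (not_le.mpr hx2.2)))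
  have hMam : Ma ≤ m := by
    have : (Ma:ℝ) < m + 1 := lt_of_le_of_lt ha hm2
    exact_mod_cast Int.lt_add_one_iff.mp (by exact_mod_cast this)
  have hmMb : m + 1 ≤ Mb := by
    have : (m:ℝ) < Mb := lt_of_le_of_lt hm1 hb
    exact_mod_cast Int.add_one_le_iff.mpr (by exact_mod_cast this)
  intro y hy
  obtain ⟨hy1, hy2⟩ := (mem_Ico_dEnds β j m y).mp hy
  constructor
  · rw [left_le_iff]
    calc (Ma:ℝ) ≤ m := by exact_mod_cast hMam
      _ ≤ dxi β j y := hy1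
  · rw [← not_le, left_le_iff, not_le]
    calc dxi β j y < (m:ℝ) + 1 := hy2
      _ ≤ Mb := by exact_mod_cast hmMb


lemma measurable_Qbox (a b : ℝ) : MeasurableSet (Qbox a b) := by
  have h1 : Qbox a b = (Complex.re ⁻¹' Set.Ioo a b) ∩ (Complex.im ⁻¹' Set.Ioo 0 (b-a)) := rfl
  rw [h1]
  exact (Complex.measurable_re measurableSet_Ioo).inter (Complex.measurable_im measurableSet_Ioo)

lemma keyE {β : ℝ} (hβ : β = 0 ∨ β = 1/3) {γ : ℝ} (hγ : 1 ≤ γ) (A : ℝ)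
    (μω : Measure ℂ) (lam : ℤ × ℤ → ℝ≥0∞) (T : Set (ℤ × ℤ)) (G : Set ℂ)
    (hsub : ∀ k ∈ T, Qbox (dEnds β k).1 (dEnds β k).2 ⊆ G)
    (hcarl' : ∀ k₀ : ℤ × ℤ,
      (∑' k : {k : ℤ × ℤ // Set.Ico (dEnds β k).1 (dEnds β k).2 ⊆
          Set.Ico (dEnds β k₀).1 (dEnds β k₀).2}, lam k)
        ≤ ENNReal.ofReal A * (μω (Qbox (dEnds β k₀).1 (dEnds β k₀).2)) ^ γ) :
    ∑' k : ℤ × ℤ, T.indicator lam k ≤ ENNReal.ofReal A * (μω G) ^ γ := by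
  rw [ENNReal.tsum_eq_iSup_sum]
  refine iSup_le fun F => ?_
  set n : ℤ := ((F.sup fun k => k.1.toNat : ℕ) : ℤ) with hn
  set Tn : Set (ℤ × ℤ) := {k | k ∈ T ∧ k.1 ≤ n} with hTndef
  have hstep1 : ∑ k ∈ F, T.indicator lam k ≤ ∑' k : ℤ × ℤ, Tn.indicator lam k := by
    refine le_trans (Finset.sum_le_sum fun k hk => ?_) (ENNReal.sum_le_tsum F)
    by_cases hkT : k ∈ T
    · rw [Set.indicator_of_mem hkT, Set.indicator_of_mem]
      refine ⟨hkT, le_trans (Int.self_le_toNat _) ?_⟩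
      rw [hn]
      exact_mod_cast Finset.le_sup (f := fun k : ℤ × ℤ => k.1.toNat) hk
    · rw [Set.indicator_of_notMem hkT,
        Set.indicator_of_notMem (fun h => hkT h.1)]
  refine hstep1.trans ?_
  rw [← tsum_subtype]
  -- maximal-interval selection
  have hsel : ∀ a : ↥Tn, ∃ g : ℤ,
      ((a : ℤ × ℤ).1 ≤ g ∧ g ≤ n ∧ ancK β g (dEnds β (a : ℤ × ℤ)).1 ∈ T) ∧
      ∀ g', ((a : ℤ × ℤ).1 ≤ g' ∧ g' ≤ n ∧ ancK β g' (dEnds β (a : ℤ × ℤ)).1 ∈ T) → g' ≤ g := by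
    intro a
    have hex : ∃ z : ℤ, ((a : ℤ × ℤ).1 ≤ z ∧ z ≤ n ∧ ancK β z (dEnds β (a : ℤ × ℤ)).1 ∈ T) := by
      refine ⟨(a : ℤ × ℤ).1, le_rfl, a.2.2, ?_⟩
      rw [anc_unique β (left_mem_Ico β (a : ℤ × ℤ))]
      exact a.2.1
    obtain ⟨ub, hub1, hub2⟩ := Int.exists_greatest_of_bdd ⟨n, fun z hz => hz.2.1⟩ hex
    exact ⟨ub, hub1, hub2⟩
  choose gg hP hmax using hsel
  set σ : ↥Tn → ℤ × ℤ := fun a => ancK β (gg a) (dEnds β (a : ℤ × ℤ)).1 with hσdef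
  have hσT : ∀ a, σ a ∈ T := fun a => (hP a).2.2
  have hσgen : ∀ a, (σ a).1 = gg a := fun a => rfl
  have hσsub : ∀ a : ↥Tn, Set.Ico (dEnds β (a : ℤ × ℤ)).1 (dEnds β (a : ℤ × ℤ)).2 ⊆
      Set.Ico (dEnds β (σ a)).1 (dEnds β (σ a)).2 := fun a =>
    dyadic_nested hβ ((hP a).1)
      ⟨(dEnds β (a : ℤ × ℤ)).1, left_mem_Ico β _, anc_spec β (gg a) _⟩
  have hσcoh : ∀ a b : ↥Tn,
      (Set.Ico (dEnds β (σ a)).1 (dEnds β (σ a)).2 ∩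
        Set.Ico (dEnds β (σ b)).1 (dEnds β (σ b)).2).Nonempty → σ a = σ b := by
    suffices H : ∀ a b : ↥Tn, gg a ≤ gg b →
        (Set.Ico (dEnds β (σ a)).1 (dEnds β (σ a)).2 ∩
          Set.Ico (dEnds β (σ b)).1 (dEnds β (σ b)).2).Nonempty → σ a = σ b by
      intro a b hne
      rcases le_total (gg a) (gg b) with h | h
      · exact H a b h hne
      · exact (H b a h (by rwa [Set.inter_comm] at hne)).symm
    intro a b hab hne
    have hnest : Set.Ico (dEnds β (σ a)).1 (dEnds β (σ a)).2 ⊆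
        Set.Ico (dEnds β (σ b)).1 (dEnds β (σ b)).2 :=
      dyadic_nested hβ hab hne
    have hxa : (dEnds β (a : ℤ × ℤ)).1 ∈
        Set.Ico (dEnds β (σ b)).1 (dEnds β (σ b)).2 :=
      hnest (hσsub a (left_mem_Ico β _))
    have hanc : ancK β (gg b) (dEnds β (a : ℤ × ℤ)).1 = σ b :=
      anc_unique β (j := gg b) (m := (σ b).2) hxa
    have hble : gg b ≤ gg a :=
      hmax a (gg b) ⟨le_trans (hP a).1 hab, (hP b).2.1, by rw [hanc]; exact hσT b⟩
    have hgg : gg a = gg b := le_antisymm hab hble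
    rw [hσdef]
    simp only
    rw [hgg, hanc]
  -- regroup by fibers of σ
  have h1 := (Equiv.sigmaFiberEquiv σ).tsum_eq (fun a : ↥Tn => lam (a : ℤ × ℤ))
  have h2 := ENNReal.tsum_sigma'
    (fun s : (Σ J : ℤ × ℤ, {a : ↥Tn // σ a = J}) => lam (((s.2 : ↥Tn)) : ℤ × ℤ))
  have hregroup : (∑' a : ↥Tn, lam (a : ℤ × ℤ))
      = ∑' J : ℤ × ℤ, ∑' b : {a : ↥Tn // σ a = J}, lam ((b : ↥Tn) : ℤ × ℤ) :=
    h1.symm.trans h2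
  rw [hregroup]
  set C : ℝ≥0∞ := ENNReal.ofReal A * (μω G) ^ (γ - 1) with hC
  have hJ : ∀ J : ℤ × ℤ, (∑' b : {a : ↥Tn // σ a = J}, lam ((b : ↥Tn) : ℤ × ℤ))
      ≤ (Set.range σ).indicator
        (fun J => C * μω (Qbox (dEnds β J).1 (dEnds β J).2)) J := by
    intro J
    rcases isEmpty_or_nonempty {a : ↥Tn // σ a = J} with hE | hNE
    · rw [tsum_empty]; exact zero_le
    obtain ⟨a0, ha0⟩ := hNE.some
    rw [Set.indicator_of_mem (Set.mem_range.mpr ⟨a0, ha0⟩)]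
    have hJT : J ∈ T := ha0 ▸ hσT a0
    calc (∑' b : {a : ↥Tn // σ a = J}, lam ((b : ↥Tn) : ℤ × ℤ))
        ≤ ∑' k : {k : ℤ × ℤ // Set.Ico (dEnds β k).1 (dEnds β k).2 ⊆
            Set.Ico (dEnds β J).1 (dEnds β J).2}, lam k := by
          refine Summable.tsum_le_tsum_of_inj
            (fun b => ⟨((b : ↥Tn) : ℤ × ℤ), by
              have := hσsub (b : ↥Tn)
              rw [b.2] at this
              exact this⟩)
            (fun b₁ b₂ h => ?_) (fun c _ => zero_le) (fun b => le_rfl)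
            ENNReal.summable ENNReal.summable
          have h' : ((b₁ : ↥Tn) : ℤ × ℤ) = ((b₂ : ↥Tn) : ℤ × ℤ) := by simpa using h
          exact Subtype.ext (Subtype.ext h')
      _ ≤ ENNReal.ofReal A * (μω (Qbox (dEnds β J).1 (dEnds β J).2)) ^ γ := hcarl' J
      _ ≤ ENNReal.ofReal A * ((μω G) ^ (γ - 1) * μω (Qbox (dEnds β J).1 (dEnds β J).2)) :=
          mul_le_mul_right (aux_rpow_le_of_le hγ (measure_mono (hsub J hJT))) _
      _ = C * μω (Qbox (dEnds β J).1 (dEnds β J).2) := by rw [hC, mul_assoc]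
  calc (∑' J : ℤ × ℤ, ∑' b : {a : ↥Tn // σ a = J}, lam ((b : ↥Tn) : ℤ × ℤ))
      ≤ ∑' J : ℤ × ℤ, (Set.range σ).indicator
          (fun J => C * μω (Qbox (dEnds β J).1 (dEnds β J).2)) J := ENNReal.tsum_le_tsum hJ
    _ = ∑' J : ↥(Set.range σ), C * μω (Qbox (dEnds β (J : ℤ × ℤ)).1 (dEnds β (J : ℤ × ℤ)).2) :=
        (tsum_subtype _ _).symm
    _ = C * ∑' J : ↥(Set.range σ), μω (Qbox (dEnds β (J : ℤ × ℤ)).1 (dEnds β (J : ℤ × ℤ)).2) :=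
        ENNReal.tsum_mul_left
    _ = C * μω (⋃ J ∈ Set.range σ, Qbox (dEnds β J).1 (dEnds β J).2) := by
        rw [measure_biUnion (Set.countable_range σ) ?disj
          (fun J _ => measurable_Qbox _ _)]
        case disj =>
          rintro J1 hJ1 J2 hJ2 hne12
          rw [Function.onFun, Set.disjoint_left]
          intro z hz1 hz2
          obtain ⟨a1, ha1⟩ := hJ1
          obtain ⟨a2, ha2⟩ := hJ2
          refine hne12 ?_
          rw [← ha1, ← ha2]
          refine hσcoh a1 a2 ?_
          rw [ha1, ha2]
          exact ⟨z.re, ⟨hz1.1.1.le, hz1.1.2⟩, ⟨hz2.1.1.le, hz2.1.2⟩⟩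
    _ ≤ C * μω G := by
        refine mul_le_mul_right (measure_mono ?_) _
        refine Set.iUnion₂_subset fun J hJmem => ?_
        obtain ⟨a, ha⟩ := hJmem
        exact hsub J (ha ▸ hσT a)
    _ = ENNReal.ofReal A * (μω G) ^ γ := by
        rw [hC, mul_assoc, aux_rpow_sub_one_mul hγ]


lemma meas_base {r : ℝ} : Measurable fun s : ℝ => ENNReal.ofReal (r * s ^ (r - 1)) := by
  measurability

lemma meas_indset {x : ℝ≥0∞} : MeasurableSet {s : ℝ | ENNReal.ofReal s < x} :=
  ENNReal.measurable_ofReal measurableSet_Iio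

lemma cheb (μω : Measure ℂ) (M : ℂ → ℝ≥0∞) (hM : Measurable M) {p : ℝ} (hp : 0 < p)
    {τ : ℝ≥0∞} (hτ0 : τ ≠ 0) (hτt : τ ≠ ⊤) :
    μω {z | τ < M z} ≤ τ ^ (-p) * ∫⁻ z, M z ^ p ∂μω := by
  have h1 : τ ^ p * μω {z | τ < M z} ≤ ∫⁻ z, M z ^ p ∂μω := by
    calc τ ^ p * μω {z | τ < M z} = ∫⁻ _ in {z | τ < M z}, τ ^ p ∂μω :=
        (setLIntegral_const _ _).symm
      _ ≤ ∫⁻ z in {z | τ < M z}, M z ^ p ∂μω :=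
        setLIntegral_mono (hM.pow_const p) fun z hz => ENNReal.rpow_le_rpow (le_of_lt hz) hp.le
      _ ≤ ∫⁻ z, M z ^ p ∂μω := setLIntegral_le_lintegral _ _
  calc μω {z | τ < M z} = (τ ^ (-p) * τ ^ p) * μω {z | τ < M z} := by
        rw [← ENNReal.rpow_add _ _ hτ0 hτt]
        norm_num
    _ = τ ^ (-p) * (τ ^ p * μω {z | τ < M z}) := by rw [mul_assoc]
    _ ≤ τ ^ (-p) * ∫⁻ z, M z ^ p ∂μω := mul_le_mul_right h1 _

lemma layercake_int (μω : Measure ℂ) [SFinite μω] (M : ℂ → ℝ≥0∞) (hM : Measurable M)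
    {p : ℝ} (hp : 0 < p) :
    ∫⁻ t in Set.Ioi (0:ℝ), ENNReal.ofReal (p * t ^ (p - 1)) * μω {z | ENNReal.ofReal t < M z}
      = ∫⁻ z, M z ^ p ∂μω := by
  set S : Set (ℝ × ℂ) := {q : ℝ × ℂ | ENNReal.ofReal q.1 < M q.2} with hS
  have hSmeas : MeasurableSet S :=
    measurableSet_lt (ENNReal.measurable_ofReal.comp measurable_fst) (hM.comp measurable_snd)
  set F : ℝ × ℂ → ℝ≥0∞ := fun q => ENNReal.ofReal (p * q.1 ^ (p - 1)) * S.indicator 1 q with hF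
  have hFmeas : Measurable F := by
    refine Measurable.mul ?_ ?_
    · exact meas_base.comp measurable_fst
    · exact Measurable.indicator measurable_const hSmeas
  have hzmeas : ∀ t : ℝ, MeasurableSet {z : ℂ | ENNReal.ofReal t < M z} :=
    fun t => hM measurableSet_Ioi
  have hpt : ∀ t : ℝ, (∫⁻ z, F (t, z) ∂μω)
      = ENNReal.ofReal (p * t ^ (p - 1)) * μω {z | ENNReal.ofReal t < M z} := by
    intro t
    have hzind : Measurable fun z : ℂ => S.indicator (1 : ℝ × ℂ → ℝ≥0∞) (t, z) := by
      have heq : (fun z : ℂ => S.indicator (1 : ℝ × ℂ → ℝ≥0∞) (t, z))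
          = ({z : ℂ | ENNReal.ofReal t < M z}).indicator (1 : ℂ → ℝ≥0∞) := by
        funext z
        by_cases h : ENNReal.ofReal t < M z
        · rw [Set.indicator_of_mem (show (t, z) ∈ S from h),
            Set.indicator_of_mem (show z ∈ {z : ℂ | ENNReal.ofReal t < M z} from h)]
          rfl
        · rw [Set.indicator_of_notMem (show (t, z) ∉ S from h),
            Set.indicator_of_notMem (show z ∉ {z : ℂ | ENNReal.ofReal t < M z} from h)]
      rw [heq]
      exact Measurable.indicator measurable_const (hzmeas t)
    refine Eq.trans (lintegral_const_mul (ENNReal.ofReal (p * t ^ (p - 1))) hzind) ?_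
    congr 1
    rw [← lintegral_indicator_one (hzmeas t)]
    refine lintegral_congr fun z => ?_
    by_cases h : ENNReal.ofReal t < M z
    · rw [Set.indicator_of_mem (show (t, z) ∈ S from h),
        Set.indicator_of_mem (show z ∈ {z : ℂ | ENNReal.ofReal t < M z} from h)]
      rfl
    · rw [Set.indicator_of_notMem (show (t, z) ∉ S from h),
        Set.indicator_of_notMem (show z ∉ {z : ℂ | ENNReal.ofReal t < M z} from h)]
  calc ∫⁻ t in Set.Ioi (0:ℝ), ENNReal.ofReal (p * t ^ (p - 1)) * μω {z | ENNReal.ofReal t < M z}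
      = ∫⁻ t in Set.Ioi (0:ℝ), ∫⁻ z, F (t, z) ∂μω := (lintegral_congr fun t => (hpt t).symm)
    _ = ∫⁻ z, ∫⁻ t in Set.Ioi (0:ℝ), F (t, z) ∂volume ∂μω := by
        exact lintegral_lintegral_swap hFmeas.aemeasurable
    _ = ∫⁻ z, M z ^ p ∂μω := by
        refine lintegral_congr fun z => ?_
        have hfz : ∀ t : ℝ, F (t, z)
            = ({s : ℝ | ENNReal.ofReal s < M z}.indicator
                (fun s => ENNReal.ofReal (p * s ^ (p - 1)))) t := by
          intro t
          by_cases h : ENNReal.ofReal t < M z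
          · rw [Set.indicator_of_mem (show t ∈ {s : ℝ | ENNReal.ofReal s < M z} from h), hF]
            simp only
            rw [Set.indicator_of_mem (show (t, z) ∈ S from h)]
            simp
          · rw [Set.indicator_of_notMem (show t ∉ {s : ℝ | ENNReal.ofReal s < M z} from h), hF]
            simp only
            rw [Set.indicator_of_notMem (show (t, z) ∉ S from h)]
            simp
        rw [show (fun t : ℝ => F (t, z)) = _ from funext hfz]
        exact layer hp (M z)

lemma luxNorm_le_dyadicMax (β α : ℝ) (Φ : ℝ → ℝ) (ω : ℂ → ℝ) (f : ℂ → ℂ) {k : ℤ × ℤ} {z : ℂ}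
    (hz : z ∈ Qbox (dEnds β k).1 (dEnds β k).2) :
    luxNorm α Φ ω (dEnds β k).1 (dEnds β k).2 f ≤ dyadicMax β α Φ ω f z :=
  le_iSup_of_le (dEnds β k) (le_iSup_of_le (dEnds_mem_grid β k) (le_iSup_of_le hz le_rfl))

lemma dyadicMax_measurable (β α : ℝ) (Φ : ℝ → ℝ) (ω : ℂ → ℝ) (f : ℂ → ℂ) :
    Measurable (dyadicMax β α Φ ω f) := by
  have heq : dyadicMax β α Φ ω f = fun z => ⨆ k : ℤ × ℤ,
      (Qbox (dEnds β k).1 (dEnds β k).2).indicator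
        (fun _ => luxNorm α Φ ω (dEnds β k).1 (dEnds β k).2 f) z := by
    funext z
    apply le_antisymm
    · refine iSup_le fun I => iSup_le fun hI => iSup_le fun hz => ?_
      rw [grid_eq_range] at hI
      obtain ⟨k, rfl⟩ := hI
      exact le_iSup_of_le k (Set.indicator_of_mem hz
        (fun _ => luxNorm α Φ ω (dEnds β k).1 (dEnds β k).2 f)).symm.le
    · refine iSup_le fun k => ?_
      by_cases hz : z ∈ Qbox (dEnds β k).1 (dEnds β k).2
      · rw [Set.indicator_of_mem hz]
        exact le_iSup_of_le (dEnds β k)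
          (le_iSup_of_le (dEnds_mem_grid β k) (le_iSup_of_le hz le_rfl))
      · rw [Set.indicator_of_notMem hz]
        exact zero_le
  rw [heq]
  exact Measurable.iSup fun k => Measurable.indicator measurable_const (measurable_Qbox _ _)

lemma alg (A : ℝ) {p γ t : ℝ} (hp : 0 < p) (hγ : 1 ≤ γ) (ht : 0 < t) (X W : ℝ≥0∞) :
    ENNReal.ofReal ((p * γ) * t ^ (p * γ - 1)) * (ENNReal.ofReal A *
      (((ENNReal.ofReal t) ^ (-p) * X) ^ (γ - 1) * W))
    = (ENNReal.ofReal A * ENNReal.ofReal γ * X ^ (γ - 1)) *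
        (ENNReal.ofReal (p * t ^ (p - 1)) * W) := by
  have hτ0 : ENNReal.ofReal t ≠ 0 := ne_of_gt (ENNReal.ofReal_pos.mpr ht)
  have hτt : ENNReal.ofReal t ≠ ⊤ := ENNReal.ofReal_ne_top
  have h1 : ENNReal.ofReal ((p * γ) * t ^ (p * γ - 1))
      = ENNReal.ofReal γ * (ENNReal.ofReal p * (ENNReal.ofReal t) ^ (p * γ - 1)) := by
    rw [ENNReal.ofReal_rpow_of_pos ht, ← ENNReal.ofReal_mul hp.le,
      ← ENNReal.ofReal_mul (by linarith : (0:ℝ) ≤ γ)]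
    congr 1
    ring
  have h2 : ENNReal.ofReal (p * t ^ (p - 1))
      = ENNReal.ofReal p * (ENNReal.ofReal t) ^ (p - 1) := by
    rw [ENNReal.ofReal_rpow_of_pos ht, ← ENNReal.ofReal_mul hp.le]
  have h3 : (ENNReal.ofReal t) ^ (p * γ - 1) * (ENNReal.ofReal t) ^ (-p * (γ - 1))
      = (ENNReal.ofReal t) ^ (p - 1) := by
    rw [← ENNReal.rpow_add _ _ hτ0 hτt]
    congr 1
    ring
  rw [ENNReal.mul_rpow_of_nonneg _ _ (by linarith : (0:ℝ) ≤ γ - 1), ← ENNReal.rpow_mul,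
    h1, h2, ← h3]
  ring

end MyHelpers

/-- Theorem 2.9, Carleson embedding: if `{Λ_Q}` satisfies the
`(ω,α,γ)`-Carleson condition with constant `A`, then for every `p > 1`, `Φ ∈ B_p`
and `f`, `∑_Q Λ_Q ‖f‖_{Q,Φ,ω,α}^{pγ} ≤ B ‖M^{d,β}_{Φ,ω,α} f‖_{L^p(ω dV_α)}^{pγ}`. -/
theorem statement14 (α β γ : ℝ) (hα : -1 < α) (hβ : β = 0 ∨ β = 1/3) (hγ : 1 ≤ γ)
    (ω : ℂ → ℝ) (hω : IsWeight α ω)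
    (Λ : ℝ × ℝ → ℝ≥0∞) (A : ℝ) (hA : 0 < A)
    (hcarl : ∀ I₀ ∈ dyadicGrid β,
      (∑' I : {I : ℝ × ℝ // I ∈ dyadicGrid β ∧ Set.Ico I.1 I.2 ⊆ Set.Ico I₀.1 I₀.2},
          Λ I.val)
        ≤ ENNReal.ofReal A * (wvol α ω (Qbox I₀.1 I₀.2)) ^ γ) :
    ∃ B : ℝ, 0 < B ∧ ∀ p : ℝ, 1 < p → ∀ Φ : ℝ → ℝ, IsNormalizedYoung Φ → InBp Φ p →
      ∀ f : ℂ → ℂ, Measurable f → HasCompactSupport f →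
      (∑' I : {I : ℝ × ℝ // I ∈ dyadicGrid β},
          Λ I.val * (luxNorm α Φ ω I.val.1 I.val.2 f) ^ (p * γ))
        ≤ ENNReal.ofReal B *
            (∫⁻ z, (dyadicMax β α Φ ω f z) ^ p * ENNReal.ofReal (ω z) ∂(Vm α)) ^ γ := by
  classical
  have hγ0 : 0 < γ := lt_of_lt_of_le one_pos hγ
  refine ⟨A * γ, by positivity, ?_⟩
  intro p hp Φ hΦ hBp f hf hfc
  have hp0 : 0 < p := lt_trans one_pos hp
  have hr : 0 < p * γ := by positivity
  set M : ℂ → ℝ≥0∞ := dyadicMax β α Φ ω f with hMdef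
  have hMmeas : Measurable M := dyadicMax_measurable β α Φ ω f
  set ν : ℤ × ℤ → ℝ≥0∞ := fun k => luxNorm α Φ ω (dEnds β k).1 (dEnds β k).2 f with hνdef
  set lam : ℤ × ℤ → ℝ≥0∞ := fun k => Λ (dEnds β k) with hlamdef
  set μω : Measure ℂ := (Vm α).withDensity (fun z => ENNReal.ofReal (ω z)) with hμωdef
  haveI hsf : SFinite μω := by
    rw [hμωdef]
    have : SFinite (Vm α) := by unfold Vm; infer_instance
    infer_instance
  set J : ℝ≥0∞ := ∫⁻ z, M z ^ p * ENNReal.ofReal (ω z) ∂(Vm α) with hJdef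
  have hinj := dEnds_injective β
  have eLHS : (∑' I : {I : ℝ × ℝ // I ∈ dyadicGrid β},
      Λ I.val * (luxNorm α Φ ω I.val.1 I.val.2 f) ^ (p * γ))
      = ∑' k : ℤ × ℤ, lam k * ν k ^ (p * γ) := by
    refine (Equiv.tsum_eq (Equiv.ofBijective
      (fun k : ℤ × ℤ => (⟨dEnds β k, dEnds_mem_grid β k⟩ : {I : ℝ × ℝ // I ∈ dyadicGrid β}))
      ⟨fun a b h => hinj (congrArg Subtype.val h), fun I => ?_⟩)
      (fun I : {I : ℝ × ℝ // I ∈ dyadicGrid β} =>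
        Λ I.val * (luxNorm α Φ ω I.val.1 I.val.2 f) ^ (p * γ))).symm
    obtain ⟨k, hk⟩ := (show I.val ∈ Set.range (dEnds β) from (grid_eq_range β) ▸ I.2)
    exact ⟨k, Subtype.ext hk⟩
  rw [eLHS]
  have hcarlZ : ∀ k₀ : ℤ × ℤ,
      (∑' k : {k : ℤ × ℤ // Set.Ico (dEnds β k).1 (dEnds β k).2 ⊆
          Set.Ico (dEnds β k₀).1 (dEnds β k₀).2}, lam k.val)
        ≤ ENNReal.ofReal A * (μω (Qbox (dEnds β k₀).1 (dEnds β k₀).2)) ^ γ := by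
    intro k₀
    have hwv : μω (Qbox (dEnds β k₀).1 (dEnds β k₀).2)
        = wvol α ω (Qbox (dEnds β k₀).1 (dEnds β k₀).2) := by
      rw [hμωdef]
      exact withDensity_apply _ (measurable_Qbox _ _)
    rw [hwv]
    refine le_trans (le_of_eq ?_) (hcarl (dEnds β k₀) (dEnds_mem_grid β k₀))
    have hmapmem : ∀ k : {k : ℤ × ℤ // Set.Ico (dEnds β k).1 (dEnds β k).2 ⊆
        Set.Ico (dEnds β k₀).1 (dEnds β k₀).2},
        dEnds β k.val ∈ dyadicGrid β ∧
          Set.Ico (dEnds β k.val).1 (dEnds β k.val).2 ⊆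
            Set.Ico (dEnds β k₀).1 (dEnds β k₀).2 :=
      fun k => ⟨dEnds_mem_grid β k.val, k.2⟩
    refine Equiv.tsum_eq (Equiv.ofBijective (fun k => (⟨dEnds β k.val, hmapmem k⟩ :
        {I : ℝ × ℝ // I ∈ dyadicGrid β ∧
          Set.Ico I.1 I.2 ⊆ Set.Ico (dEnds β k₀).1 (dEnds β k₀).2}))
      ⟨fun a b h => Subtype.ext (hinj (congrArg Subtype.val h)), ?_⟩) (fun I => Λ I.val)
    rintro ⟨I, hIg, hIs⟩
    obtain ⟨k, hk⟩ := (show I ∈ Set.range (dEnds β) from (grid_eq_range β) ▸ hIg)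
    exact ⟨⟨k, by rw [hk]; exact hIs⟩, Subtype.ext hk⟩
  rcases eq_or_ne J ⊤ with hJt | hJt
  · rw [hJt, ENNReal.top_rpow_of_pos hγ0, ENNReal.mul_top
      (ne_of_gt (ENNReal.ofReal_pos.mpr (by positivity)))]
    exact le_top
  have hJalt : (∫⁻ z, M z ^ p ∂μω) = J := by
    rw [hμωdef, lintegral_withDensity_eq_lintegral_mul _ hω.1.ennreal_ofReal
      (hMmeas.pow_const p), hJdef]
    exact lintegral_congr fun z => mul_comm _ _
  have hJpne : (∫⁻ z, M z ^ p ∂μω) ≠ ⊤ := by rw [hJalt]; exact hJt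
  set Cc : ℝ≥0∞ := ENNReal.ofReal A * ENNReal.ofReal γ * (∫⁻ z, M z ^ p ∂μω) ^ (γ - 1)
    with hCc
  have hCcne : Cc ≠ ⊤ := by
    rw [hCc]
    exact ENNReal.mul_ne_top (ENNReal.mul_ne_top ENNReal.ofReal_ne_top ENNReal.ofReal_ne_top)
      (ENNReal.rpow_ne_top_of_nonneg (by linarith) hJpne)
  have step1 : (∑' k : ℤ × ℤ, lam k * ν k ^ (p * γ))
      = ∫⁻ t in Set.Ioi (0:ℝ), ∑' k : ℤ × ℤ, lam k *
        ({s : ℝ | ENNReal.ofReal s < ν k}.indicator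
          (fun s => ENNReal.ofReal ((p * γ) * s ^ (p * γ - 1)))) t := by
    rw [lintegral_tsum (fun k => ((meas_base.indicator meas_indset).const_mul
      (lam k)).aemeasurable)]
    refine tsum_congr fun k => ?_
    rw [lintegral_const_mul _ (meas_base.indicator meas_indset), layer hr (ν k)]
  have step2 : ∀ t ∈ Set.Ioi (0:ℝ), (∑' k : ℤ × ℤ, lam k *
        ({s : ℝ | ENNReal.ofReal s < ν k}.indicator
          (fun s => ENNReal.ofReal ((p * γ) * s ^ (p * γ - 1)))) t)
      ≤ Cc * (ENNReal.ofReal (p * t ^ (p - 1)) * μω {z | ENNReal.ofReal t < M z}) := by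
    intro t ht
    have hτ0 : ENNReal.ofReal t ≠ 0 := ne_of_gt (ENNReal.ofReal_pos.mpr ht)
    have hτt : ENNReal.ofReal t ≠ ⊤ := ENNReal.ofReal_ne_top
    have hTsub : ∀ k ∈ {k : ℤ × ℤ | ENNReal.ofReal t < ν k},
        Qbox (dEnds β k).1 (dEnds β k).2 ⊆ {z | ENNReal.ofReal t < M z} := by
      intro k hk z hz
      exact lt_of_lt_of_le hk (luxNorm_le_dyadicMax β α Φ ω f hz)
    calc (∑' k : ℤ × ℤ, lam k *
        ({s : ℝ | ENNReal.ofReal s < ν k}.indicator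
          (fun s => ENNReal.ofReal ((p * γ) * s ^ (p * γ - 1)))) t)
        = ENNReal.ofReal ((p * γ) * t ^ (p * γ - 1)) *
            ∑' k : ℤ × ℤ, ({k : ℤ × ℤ | ENNReal.ofReal t < ν k}).indicator lam k := by
          rw [← ENNReal.tsum_mul_left]
          refine tsum_congr fun k => ?_
          by_cases hk : ENNReal.ofReal t < ν k
          · rw [Set.indicator_of_mem (show t ∈ {s : ℝ | ENNReal.ofReal s < ν k} from hk),
              Set.indicator_of_mem (show k ∈ {k : ℤ × ℤ | ENNReal.ofReal t < ν k} from hk)]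
            ring
          · rw [Set.indicator_of_notMem
                (show t ∉ {s : ℝ | ENNReal.ofReal s < ν k} from hk),
              Set.indicator_of_notMem
                (show k ∉ {k : ℤ × ℤ | ENNReal.ofReal t < ν k} from hk),
              mul_zero, mul_zero]
      _ ≤ ENNReal.ofReal ((p * γ) * t ^ (p * γ - 1)) *
            (ENNReal.ofReal A * (μω {z | ENNReal.ofReal t < M z}) ^ γ) :=
          mul_le_mul_right (keyE hβ hγ A μω lam _ _ hTsub hcarlZ) _
      _ ≤ ENNReal.ofReal ((p * γ) * t ^ (p * γ - 1)) * (ENNReal.ofReal A *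
            (((ENNReal.ofReal t) ^ (-p) * ∫⁻ z, M z ^ p ∂μω) ^ (γ - 1) *
              μω {z | ENNReal.ofReal t < M z})) := by
          refine mul_le_mul_right (mul_le_mul_right ?_ _) _
          exact aux_rpow_le_of_le hγ (cheb μω M hMmeas hp0 hτ0 hτt)
      _ = Cc * (ENNReal.ofReal (p * t ^ (p - 1)) * μω {z | ENNReal.ofReal t < M z}) :=
          alg A hp0 hγ ht _ _
  calc (∑' k : ℤ × ℤ, lam k * ν k ^ (p * γ))
      = _ := step1
    _ ≤ ∫⁻ t in Set.Ioi (0:ℝ),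
          Cc * (ENNReal.ofReal (p * t ^ (p - 1)) * μω {z | ENNReal.ofReal t < M z}) :=
        lintegral_mono_ae ((ae_restrict_iff' measurableSet_Ioi).mpr (ae_of_all _ step2))
    _ = Cc * ∫⁻ t in Set.Ioi (0:ℝ),
          ENNReal.ofReal (p * t ^ (p - 1)) * μω {z | ENNReal.ofReal t < M z} :=
        lintegral_const_mul' _ _ hCcne
    _ = Cc * ∫⁻ z, M z ^ p ∂μω := by rw [layercake_int μω M hMmeas hp0]
    _ = ENNReal.ofReal A * ENNReal.ofReal γ *
        ((∫⁻ z, M z ^ p ∂μω) ^ (γ - 1) * ∫⁻ z, M z ^ p ∂μω) := by rw [hCc]; ring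
    _ = ENNReal.ofReal (A * γ) * J ^ γ := by
        rw [aux_rpow_sub_one_mul hγ, hJalt, ← ENNReal.ofReal_mul hA.le]
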